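/- arXiv:1507.03491 — 3 statements merged into one kernel-verified Lean document; each statement's English description precedes it below -/
import Mathlib

section
/- For M₀ > 0 let W̃(x) = ½(erf(x + M₀/2) − erf(x − M₀/2)). Then for every real λ, |∫_ℝ W̃(x) e^{-iλx} dx| ≤ M₀ e^{-λ²/4}. In particular the Fourier transform of W̃ decays superalgebraically. -/
open MeasureTheory Real

/-- The error function `erf x = (2/√π) ∫_0^x e^{-t²} dt`. -/
noncomputable def erf (x : ℝ) : ℝ :=
  (2 / Real.sqrt π) * ∫ t in (0:ℝ)..x, Real.exp (-t ^ 2)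

lemma gauss_ii : Integrable (fun t : ℝ => Real.exp (-t ^ 2)) := by
  simpa [neg_mul, one_mul] using integrable_exp_neg_mul_sq (b := (1:ℝ)) one_pos

lemma gauss_ii' (s : ℝ) : Integrable (fun x : ℝ => Real.exp (-(x - s) ^ 2)) := by
  simpa using gauss_ii.comp_sub_right s

lemma gauss_fourier (lam : ℝ) :
    ∫ x : ℝ, Complex.exp (-(x:ℂ)^2) * Complex.exp (-(Complex.I * lam * x))
      = (Real.sqrt π : ℂ) * Real.exp (-lam^2/4) := by
  have h := fourierIntegral_gaussian (b := (1:ℂ)) (by norm_num) (-(lam:ℂ))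
  have h1 : ∀ x : ℝ, Complex.exp (Complex.I * (-(lam:ℂ)) * x) * Complex.exp (-1 * (x:ℂ)^2)
      = Complex.exp (-(x:ℂ)^2) * Complex.exp (-(Complex.I * lam * x)) := by
    intro x
    rw [mul_comm]
    congr 2 <;> ring
  rw [show (∫ x : ℝ, Complex.exp (Complex.I * (-(lam:ℂ)) * x) * Complex.exp (-1 * (x:ℂ)^2))
      = ∫ x : ℝ, Complex.exp (-(x:ℂ)^2) * Complex.exp (-(Complex.I * lam * x)) from by
        congr 1; ext x; exact h1 x] at h
  rw [h]
  congr 1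
  · rw [div_one, Real.sqrt_eq_rpow,
      show ((1/2 : ℂ)) = ((1/2:ℝ):ℂ) by norm_num, ← Complex.ofReal_cpow Real.pi_pos.le]
  · rw [show (-(-(lam:ℂ))^2 / (4*1)) = ((-lam^2/4 : ℝ) : ℂ) from by push_cast; ring,
      ← Complex.ofReal_exp]

lemma inner_int (lam s : ℝ) :
    ∫ x : ℝ, (Real.exp (-(x - s)^2) : ℂ) * Complex.exp (-(Complex.I * lam * x))
      = Complex.exp (-(Complex.I * lam * s)) * ((Real.sqrt π : ℂ) * Real.exp (-lam^2/4)) := by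
  have ht := MeasureTheory.integral_add_right_eq_self (μ := volume)
      (f := fun x : ℝ => (Real.exp (-(x - s)^2) : ℂ) * Complex.exp (-(Complex.I * lam * x))) s
  rw [← ht]
  have h1 : ∀ x : ℝ, (Real.exp (-((x + s) - s)^2) : ℂ) * Complex.exp (-(Complex.I * lam * ((x + s : ℝ) : ℂ)))
      = Complex.exp (-(Complex.I * lam * s)) *
          (Complex.exp (-(x:ℂ)^2) * Complex.exp (-(Complex.I * lam * x))) := by
    intro x
    rw [Complex.ofReal_exp, ← Complex.exp_add, ← Complex.exp_add, ← Complex.exp_add]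
    congr 1
    push_cast
    ring
  rw [MeasureTheory.integral_congr_ae (Filter.Eventually.of_forall h1)]
  rw [MeasureTheory.integral_const_mul, gauss_fourier]

lemma Wt_eq (M₀ : ℝ) (hM : 0 ≤ M₀) (x : ℝ) :
    (1 / 2) * (erf (x + M₀ / 2) - erf (x - M₀ / 2))
      = (Real.sqrt π)⁻¹ *
        ∫ s in Set.Ioc (-(M₀/2)) (M₀/2), Real.exp (-(x - s) ^ 2) := by
  have hint : ∀ a b : ℝ, IntervalIntegrable (fun t => Real.exp (-t^2)) volume a b :=
    fun _ _ => gauss_ii.intervalIntegrable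
  have h1 : erf (x + M₀/2) - erf (x - M₀/2)
      = (2 / Real.sqrt π) * ∫ t in (x - M₀/2)..(x + M₀/2), Real.exp (-t^2) := by
    rw [erf, erf, ← mul_sub,
      intervalIntegral.integral_interval_sub_left (hint _ _) (hint _ _)]
  have h2 : (∫ s in (-(M₀/2))..(M₀/2), Real.exp (-(x - s)^2))
      = ∫ t in (x - M₀/2)..(x + M₀/2), Real.exp (-t^2) := by
    simpa [sub_neg_eq_add] using
      intervalIntegral.integral_comp_sub_left (a := -(M₀/2)) (b := M₀/2)
        (fun t => Real.exp (-t^2)) x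
  have h3 : (∫ s in (-(M₀/2))..(M₀/2), Real.exp (-(x - s)^2))
      = ∫ s in Set.Ioc (-(M₀/2)) (M₀/2), Real.exp (-(x - s)^2) :=
    intervalIntegral.integral_of_le (by linarith)
  rw [h1, ← h2, h3]
  have hπ : Real.sqrt π ≠ 0 := ne_of_gt (Real.sqrt_pos.2 Real.pi_pos)
  field_simp

lemma prod_int (M₀ lam : ℝ) (hM : 0 < M₀) :
    Integrable (Function.uncurry fun s x : ℝ =>
        (Real.exp (-(x - s)^2) : ℂ) * Complex.exp (-(Complex.I * lam * x)))
      ((volume.restrict (Set.Ioc (-(M₀/2)) (M₀/2))).prod volume) := by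
  have hcont : Continuous (Function.uncurry fun s x : ℝ =>
      (Real.exp (-(x - s)^2) : ℂ) * Complex.exp (-(Complex.I * lam * x))) := by
    fun_prop
  rw [MeasureTheory.integrable_prod_iff hcont.aestronglyMeasurable]
  constructor
  · refine Filter.Eventually.of_forall fun s => ?_
    have hb : Integrable (fun x : ℝ => (Real.exp (-(x - s)^2) : ℂ)) :=
      (gauss_ii' s).ofReal
    have : Integrable (fun x : ℝ =>
        Complex.exp (-(Complex.I * lam * x)) * (Real.exp (-(x - s)^2) : ℂ)) := by
      refine hb.bdd_mul (Continuous.aestronglyMeasurable (by continuity)) (c := 1) (Filter.Eventually.of_forall fun x => ?_)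
      simp [Complex.norm_exp]
    simpa [mul_comm] using this
  · have hval : ∀ s : ℝ, (∫ x : ℝ, ‖(Real.exp (-(x - s)^2) : ℂ) *
        Complex.exp (-(Complex.I * lam * x))‖) = Real.sqrt π := by
      intro s
      have hn : ∀ x : ℝ, ‖(Real.exp (-(x - s)^2) : ℂ) *
          Complex.exp (-(Complex.I * lam * x))‖ = Real.exp (-(x - s)^2) := by
        intro x
        simp [Complex.norm_exp, abs_of_pos (Real.exp_pos _), ← Complex.ofReal_sub, ← Complex.ofReal_pow]
      calc (∫ x : ℝ, ‖(Real.exp (-(x - s)^2) : ℂ) *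
              Complex.exp (-(Complex.I * lam * x))‖)
          = ∫ x : ℝ, Real.exp (-(x - s)^2) := by simp only [hn]
        _ = ∫ x : ℝ, Real.exp (-x^2) := by
            simpa using MeasureTheory.integral_sub_right_eq_self (μ := volume)
              (f := fun x : ℝ => Real.exp (-x^2)) s
        _ = Real.sqrt π := by simpa using integral_gaussian 1
    simp only [Function.uncurry_apply_pair]
    simp only [hval]
    exact integrableOn_const measure_Ioc_lt_top.ne

lemma main_bound (M₀ : ℝ) (hM₀ : 0 < M₀) (Wt : ℝ → ℝ)
    (hWt : ∀ x, Wt x = (1 / 2) * (erf (x + M₀ / 2) - erf (x - M₀ / 2))) (lam : ℝ) :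
    ‖∫ x : ℝ, (Wt x : ℂ) * Complex.exp (-(Complex.I * lam * x))‖
      ≤ M₀ * Real.exp (-lam ^ 2 / 4) := by
  have hπ : (0:ℝ) < Real.sqrt π := Real.sqrt_pos.2 Real.pi_pos
  set S := Set.Ioc (-(M₀/2)) (M₀/2) with hS
  have step1 : ∀ x : ℝ, ((Wt x : ℂ)) * Complex.exp (-(Complex.I * lam * x))
      = ((Real.sqrt π : ℂ))⁻¹ *
        ∫ s in S, (Real.exp (-(x - s)^2) : ℂ) * Complex.exp (-(Complex.I * lam * x)) := by
    intro x
    rw [hWt, Wt_eq M₀ hM₀.le x, Complex.ofReal_mul, Complex.ofReal_inv, mul_assoc]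
    congr 1
    rw [show ((∫ s in S, Real.exp (-(x - s)^2) : ℝ) : ℂ)
        = ∫ s in S, ((Real.exp (-(x - s)^2) : ℝ) : ℂ) from (integral_ofReal).symm]
    exact (MeasureTheory.integral_mul_const _ _).symm
  have key : (∫ x : ℝ, (Wt x : ℂ) * Complex.exp (-(Complex.I * lam * x)))
      = ((Real.sqrt π : ℂ))⁻¹ *
        ∫ s in S, Complex.exp (-(Complex.I * lam * s)) *
          ((Real.sqrt π : ℂ) * Real.exp (-lam^2/4)) := by
    calc (∫ x : ℝ, (Wt x : ℂ) * Complex.exp (-(Complex.I * lam * x)))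
        = ∫ x : ℝ, ((Real.sqrt π : ℂ))⁻¹ * ∫ s in S, (Real.exp (-(x - s)^2) : ℂ) *
            Complex.exp (-(Complex.I * lam * x)) :=
          MeasureTheory.integral_congr_ae (Filter.Eventually.of_forall step1)
      _ = ((Real.sqrt π : ℂ))⁻¹ * ∫ x : ℝ, ∫ s in S, (Real.exp (-(x - s)^2) : ℂ) *
            Complex.exp (-(Complex.I * lam * x)) := MeasureTheory.integral_const_mul _ _
      _ = ((Real.sqrt π : ℂ))⁻¹ * ∫ s in S, ∫ x : ℝ, (Real.exp (-(x - s)^2) : ℂ) *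
            Complex.exp (-(Complex.I * lam * x)) := by
          rw [← MeasureTheory.integral_integral_swap (prod_int M₀ lam hM₀)]
      _ = _ := by
          congr 1
          exact MeasureTheory.integral_congr_ae
            (Filter.Eventually.of_forall fun s => inner_int lam s)
  rw [key, norm_mul]
  have h1 : ‖((Real.sqrt π : ℂ))⁻¹‖ = (Real.sqrt π)⁻¹ := by
    rw [norm_inv, Complex.norm_real, Real.norm_eq_abs, abs_of_pos hπ]
  have h2 : ‖∫ s in S, Complex.exp (-(Complex.I * lam * s)) *
      ((Real.sqrt π : ℂ) * Real.exp (-lam^2/4))‖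
      ≤ M₀ * (Real.sqrt π * Real.exp (-lam^2/4)) := by
    refine le_trans (MeasureTheory.norm_integral_le_integral_norm _) ?_
    have heq : ∀ s : ℝ, ‖Complex.exp (-(Complex.I * lam * s)) *
        ((Real.sqrt π : ℂ) * Real.exp (-lam^2/4))‖
        = Real.sqrt π * Real.exp (-lam^2/4) := by
      intro s
      simp [Complex.norm_exp, abs_of_pos hπ, abs_of_pos (Real.exp_pos _), ← Complex.ofReal_pow]
    simp only [heq]
    rw [MeasureTheory.setIntegral_const, smul_eq_mul]
    have hvol : (volume S).toReal = M₀ := by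
      rw [hS, Real.volume_Ioc, ENNReal.toReal_ofReal (by linarith)]
      ring
    rw [measureReal_def, hvol]
  calc ‖((Real.sqrt π : ℂ))⁻¹‖ * ‖∫ s in S, Complex.exp (-(Complex.I * lam * s)) *
        ((Real.sqrt π : ℂ) * Real.exp (-lam^2/4))‖
      ≤ (Real.sqrt π)⁻¹ * (M₀ * (Real.sqrt π * Real.exp (-lam^2/4))) := by
        rw [h1]
        exact mul_le_mul_of_nonneg_left h2 (inv_nonneg.2 hπ.le)
    _ = M₀ * Real.exp (-lam ^ 2 / 4) := by
        field_simp

lemma decay_aux (M₀ : ℝ) (hM₀ : 0 < M₀) (n : ℕ) (lam : ℝ) :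
    M₀ * Real.exp (-lam ^ 2 / 4)
      ≤ (M₀ * n.factorial * Real.exp 2) * (1 + |lam|) ^ (-(n : ℝ)) := by
  have hb : (0:ℝ) < 1 + |lam| := by positivity
  have hfac : (0:ℝ) < n.factorial := by exact_mod_cast n.factorial_pos
  rw [Real.rpow_neg hb.le, Real.rpow_natCast, ← div_eq_mul_inv,
    le_div_iff₀ (pow_pos hb n)]
  have h1 : (1 + |lam|)^n ≤ (n.factorial : ℝ) * Real.exp (1 + |lam|) := by
    have h := Real.pow_div_factorial_le_exp (x := 1 + |lam|) (by positivity) n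
    rw [div_le_iff₀ hfac] at h
    linarith [h]
  have h2 : Real.exp (-lam^2/4) * Real.exp (1 + |lam|) ≤ Real.exp 2 := by
    rw [← Real.exp_add]
    apply Real.exp_le_exp.2
    nlinarith [sq_nonneg (|lam| - 2), _root_.sq_abs lam]
  calc M₀ * Real.exp (-lam^2/4) * (1+|lam|)^n
      ≤ M₀ * Real.exp (-lam^2/4) * ((n.factorial : ℝ) * Real.exp (1+|lam|)) :=
        mul_le_mul_of_nonneg_left h1 (by positivity)
    _ = M₀ * n.factorial * (Real.exp (-lam^2/4) * Real.exp (1+|lam|)) := by ring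
    _ ≤ M₀ * n.factorial * Real.exp 2 := mul_le_mul_of_nonneg_left h2 (by positivity)

/-- For `M₀ > 0` and the erf window `W̃(x) = ½(erf(x + M₀/2) − erf(x − M₀/2))`,
the Fourier transform satisfies `|∫ W̃(x) e^{-iλx} dx| ≤ M₀ e^{-λ²/4}` for every real `λ`;
in particular it decays superalgebraically. -/
theorem fourier_transform_erf_window_bound (M₀ : ℝ) (hM₀ : 0 < M₀)
    (Wt : ℝ → ℝ) (hWt : ∀ x, Wt x = (1 / 2) * (erf (x + M₀ / 2) - erf (x - M₀ / 2))) :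
    (∀ lam : ℝ,
      ‖∫ x : ℝ, (Wt x : ℂ) * Complex.exp (-(Complex.I * lam * x))‖
        ≤ M₀ * Real.exp (-lam ^ 2 / 4)) ∧
    (∀ n : ℕ, ∃ C : ℝ, 0 < C ∧ ∀ lam : ℝ,
      ‖∫ x : ℝ, (Wt x : ℂ) * Complex.exp (-(Complex.I * lam * x))‖
        ≤ C * (1 + |lam|) ^ (-(n : ℝ))) := by
  constructor
  · exact main_bound M₀ hM₀ Wt hWt
  · intro n
    have hfac : (0:ℝ) < n.factorial := by exact_mod_cast n.factorial_pos
    refine ⟨M₀ * n.factorial * Real.exp 2, by positivity, fun lam => ?_⟩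
    exact le_trans (main_bound M₀ hM₀ Wt hWt lam) (decay_aux M₀ hM₀ n lam)
end

section
/- Let k ∈ ℂ and let λ be a nonzero real number with |λ| ≥ 2|k|. Then, for the principal branch of the complex square root, Re(√(λ² − k²)) ≥ (√3/2)|λ|. -/
open Real Complex

/-- For `k ∈ ℂ` and a nonzero real `λ` with `|λ| ≥ 2|k|`, the principal branch of
the complex square root satisfies `Re √(λ² − k²) ≥ (√3/2)|λ|`. -/
theorem re_sqrt_sommerfeld_exponent_lower_bound
    (k : ℂ) (lam : ℝ) (hlam : lam ≠ 0) (h : 2 * ‖k‖ ≤ |lam|) :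
    Real.sqrt 3 / 2 * |lam| ≤ (((lam : ℂ) ^ 2 - k ^ 2) ^ (1 / 2 : ℂ)).re := by
  set z : ℂ := (lam : ℂ) ^ 2 - k ^ 2 with hz
  have h12 : (1 / 2 : ℂ) = (2⁻¹ : ℂ) := by norm_num
  rw [h12, Complex.cpow_inv_two_re]
  -- bound on Re z
  have hk2 : ‖k‖ ^ 2 ≤ lam ^ 2 / 4 := by
    have hk0 : (0:ℝ) ≤ ‖k‖ := norm_nonneg k
    nlinarith [_root_.sq_abs lam, abs_nonneg lam]
  have hre : 3 / 4 * lam ^ 2 ≤ z.re := by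
    have : z.re = lam ^ 2 - (k ^ 2).re := by
      simp [hz, ← Complex.ofReal_pow]
    rw [this]
    have h1 : (k ^ 2).re ≤ ‖k ^ 2‖ := Complex.re_le_norm _
    have h2 : ‖k ^ 2‖ = ‖k‖ ^ 2 := by simp [norm_pow]
    nlinarith
  have habs : z.re ≤ ‖z‖ := Complex.re_le_norm z
  have key : 3 / 4 * lam ^ 2 ≤ (‖z‖ + z.re) / 2 := by linarith
  have hnn : 0 ≤ Real.sqrt 3 / 2 * |lam| :=
    mul_nonneg (by positivity) (abs_nonneg lam)
  have hL : Real.sqrt 3 / 2 * |lam| = Real.sqrt (3 / 4 * lam ^ 2) := by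
    rw [show 3 / 4 * lam ^ 2 = (Real.sqrt 3 / 2 * |lam|) ^ 2 by
      have h3 : Real.sqrt 3 ^ 2 = 3 := Real.sq_sqrt (by norm_num)
      have habs2 : |lam| ^ 2 = lam ^ 2 := _root_.sq_abs lam
      ring_nf
      nlinarith [h3, habs2]]
    exact (Real.sqrt_sq hnn).symm
  calc Real.sqrt 3 / 2 * |lam| = Real.sqrt (3 / 4 * lam ^ 2) := hL
    _ ≤ Real.sqrt ((‖z‖ + z.re) / 2) := Real.sqrt_le_sqrt key
end

section
/- Let k ∈ ℂ, let d > 0, and let λ be a nonzero real number with |λ| ≥ 2|k|. Then, with √ denoting the principal branch of the complex square root, |e^{-√(λ²-k²) d} / √(λ²-k²)| ≤ (2/(√3 |λ|)) · e^{-(√3/2)|λ| d}. -/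
open Real Complex

/-- For `k ∈ ℂ`, `d > 0`, and a nonzero real `λ` with `|λ| ≥ 2|k|`, the Sommerfeld
integrand satisfies
`|e^{-√(λ²-k²) d} / √(λ²-k²)| ≤ (2/(√3 |λ|)) e^{-(√3/2)|λ| d}`,
where `√` is the principal branch of the complex square root. -/
theorem sommerfeld_integrand_decay_bound
    (k : ℂ) (d : ℝ) (hd : 0 < d) (lam : ℝ) (hlam : lam ≠ 0) (h : 2 * ‖k‖ ≤ |lam|) :
    ‖Complex.exp (-(((lam : ℂ) ^ 2 - k ^ 2) ^ (1 / 2 : ℂ)) * (d : ℂ))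
        / (((lam : ℂ) ^ 2 - k ^ 2) ^ (1 / 2 : ℂ))‖
      ≤ 2 / (Real.sqrt 3 * |lam|) * Real.exp (-(Real.sqrt 3 / 2) * |lam| * d) := by
  set w : ℂ := (lam : ℂ) ^ 2 - k ^ 2 with hw_def
  have hlam_pos : (0:ℝ) < |lam| := abs_pos.mpr hlam
  -- Re w ≥ (3/4) λ²
  have hk2 : ‖k‖ ^ 2 ≤ lam ^ 2 / 4 := by
    have h2 : ‖k‖ ≤ |lam| / 2 := by linarith
    have h3 : ‖k‖ ^ 2 ≤ (|lam| / 2) ^ 2 :=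
      pow_le_pow_left₀ (norm_nonneg k) h2 2
    have h4 : (|lam| / 2) ^ 2 = lam ^ 2 / 4 := by
      rw [div_pow, _root_.sq_abs]; norm_num
    linarith
  have hrek2 : (k ^ 2).re ≤ lam ^ 2 / 4 := by
    calc (k ^ 2).re ≤ ‖k ^ 2‖ := Complex.re_le_norm _
      _ = ‖k‖ ^ 2 := by rw [norm_pow]
      _ ≤ lam ^ 2 / 4 := hk2
  have hwre : (3/4) * lam ^ 2 ≤ w.re := by
    have : w.re = lam ^ 2 - (k ^ 2).re := by
      simp [hw_def, Complex.sub_re, ← Complex.ofReal_pow]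
    rw [this]; linarith
  have hlamsq : (0:ℝ) < lam ^ 2 := by positivity
  have hwre_pos : 0 < w.re := by linarith
  have hw0 : w ≠ 0 := fun h0 => by simp [h0] at hwre_pos
  set s : ℂ := w ^ (1/2 : ℂ) with hs_def
  -- s * s = w
  have hss : s * s = w := by
    rw [hs_def, ← Complex.cpow_add _ _ hw0]
    norm_num
  -- Re s ≥ 0
  have him : (Complex.log w * (1/2 : ℂ)).im = w.arg / 2 := by
    simp [Complex.mul_im, Complex.log_im]
    ring
  have hsre0 : 0 ≤ s.re := by
    rw [hs_def, Complex.cpow_def_of_ne_zero hw0, Complex.exp_re, him]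
    apply mul_nonneg (Real.exp_nonneg _)
    apply Real.cos_nonneg_of_mem_Icc
    have := abs_le.mp (Complex.abs_arg_le_pi w)
    constructor <;> [linarith [this.1]; linarith [this.2]]
  set c : ℝ := Real.sqrt 3 / 2 * |lam| with hc_def
  have hc_pos : 0 < c := by
    have : (0:ℝ) < Real.sqrt 3 := Real.sqrt_pos.mpr (by norm_num)
    positivity
  have hcsq : c ^ 2 = 3/4 * lam ^ 2 := by
    rw [hc_def, mul_pow, div_pow, Real.sq_sqrt (by norm_num : (0:ℝ) ≤ 3), _root_.sq_abs]
    ring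
  -- Re s ≥ c
  have hsre : c ≤ s.re := by
    have hre2 : c ^ 2 ≤ s.re ^ 2 := by
      have : (s * s).re = s.re * s.re - s.im * s.im := Complex.mul_re s s
      have hw2 : w.re = s.re ^ 2 - s.im ^ 2 := by rw [← hss, this]; ring
      nlinarith [sq_nonneg s.im]
    nlinarith
  have hs_norm : c ≤ ‖s‖ := le_trans hsre (le_trans (le_abs_self _) (Complex.abs_re_le_norm s))
  have hs_norm_pos : 0 < ‖s‖ := lt_of_lt_of_le hc_pos hs_norm
  -- compute the norm
  have hnorm : ‖Complex.exp (-s * (d : ℂ)) / s‖ = Real.exp (-s.re * d) / ‖s‖ := by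
    rw [norm_div, Complex.norm_exp]
    congr 2
    simp [Complex.mul_re]
  rw [hnorm]
  have h1 : Real.exp (-s.re * d) ≤ Real.exp (-(Real.sqrt 3 / 2) * |lam| * d) := by
    apply Real.exp_le_exp.mpr
    have : -(Real.sqrt 3 / 2) * |lam| * d = -c * d := by rw [hc_def]; ring
    rw [this]
    have : -s.re ≤ -c := neg_le_neg hsre
    nlinarith
  have h2 : 2 / (Real.sqrt 3 * |lam|) = 1 / c := by
    rw [hc_def]; field_simp
  rw [h2]
  calc Real.exp (-s.re * d) / ‖s‖ ≤ Real.exp (-(Real.sqrt 3 / 2) * |lam| * d) / c := by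
        apply div_le_div₀ (Real.exp_nonneg _) h1 hc_pos hs_norm
    _ = 1 / c * Real.exp (-(Real.sqrt 3 / 2) * |lam| * d) := by ring
end
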